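/- Variational upper bound on conditional mutual information: let X, X', Z be finite-valued random variables such that I(X'; Z | X) = 0, and for each value x' of X' with P(X'=x') > 0 let r(·|x') be a probability mass function on the range of Z satisfying r(z|x') > 0 whenever P(Z=z, X'=x') > 0. Then I(X; Z | X') = E_{(x,x')∼(X,X')}[ D_KL( P(Z ∈ · | X=x) ‖ r(·|x') ) ] - E_{x'∼X'}[ D_KL( P(Z ∈ · | X'=x') ‖ r(·|x') ) ]; in particular I(X; Z | X') ≤ E_{(x,x')∼(X,X')}[ D_KL( P(Z ∈ · | X=x) ‖ r(·|x') ) ]. -/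

import Mathlib

/-
Discrete probability setup: a finite sample space `Ω` with weight function `p`
(nonnegative, summing to 1).  Random variables are functions out of `Ω` into
nonempty finite sets.  `pr p X x = P(X = x)`, `ent` is Shannon entropy
(natural log, with `0 · log 0 = 0` since `Real.log 0 = 0`), `mi` is mutual
information `I(X;Y) = H(X) + H(Y) - H(X,Y)`, and `cmi` is conditional mutual
information `I(X;Y|W) = ∑ w, P(W=w) · I(X;Y | W=w)` computed with respect to
the conditional distribution `condp p W w` (terms with `P(W=w)=0` vanish).
`klDivF` is the discrete Kullback–Leibler divergence with the convention that
terms with `p s = 0` contribute `0` (indeed `0 * log 0 = 0` in Lean).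
-/

open scoped Classical
open Finset

noncomputable def pr {Ω α : Type*} [Fintype Ω] (p : Ω → ℝ) (X : Ω → α) (x : α) : ℝ :=
  ∑ ω, if X ω = x then p ω else 0

noncomputable def ent {Ω α : Type*} [Fintype Ω] [Fintype α] (p : Ω → ℝ) (X : Ω → α) : ℝ :=
  -∑ x, pr p X x * Real.log (pr p X x)

noncomputable def mi {Ω α β : Type*} [Fintype Ω] [Fintype α] [Fintype β]
    (p : Ω → ℝ) (X : Ω → α) (Y : Ω → β) : ℝ :=
  ent p X + ent p Y - ent p (fun ω => (X ω, Y ω))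

noncomputable def condp {Ω γ : Type*} [Fintype Ω] (p : Ω → ℝ) (W : Ω → γ) (w : γ) : Ω → ℝ :=
  fun ω => if W ω = w then p ω / pr p W w else 0

noncomputable def cmi {Ω α β γ : Type*} [Fintype Ω] [Fintype α] [Fintype β] [Fintype γ]
    (p : Ω → ℝ) (X : Ω → α) (Y : Ω → β) (W : Ω → γ) : ℝ :=
  ∑ w, pr p W w * mi (condp p W w) X Y

noncomputable def klDivF {S : Type*} [Fintype S] (p q : S → ℝ) : ℝ :=
  ∑ s, p s * Real.log (p s / q s)

namespace VarBoundAux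

variable {Ω α β γ : Type*} [Fintype Ω]

lemma pr_nonneg (p : Ω → ℝ) (hp : ∀ ω, 0 ≤ p ω) (X : Ω → α) (x : α) : 0 ≤ pr p X x := by
  unfold pr
  exact Finset.sum_nonneg fun ω _ => by by_cases h : X ω = x <;> simp [h, hp ω]

lemma pr_mono (p : Ω → ℝ) (hp : ∀ ω, 0 ≤ p ω) {X : Ω → α} {Y : Ω → β} {x : α} {y : β}
    (h : ∀ ω, X ω = x → Y ω = y) : pr p X x ≤ pr p Y y := by
  unfold pr
  refine Finset.sum_le_sum fun ω _ => ?_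
  by_cases hx : X ω = x
  · simp [hx, h ω hx]
  · by_cases hy : Y ω = y <;> simp [hx, hy, hp ω]

lemma pr_congr (p : Ω → ℝ) {X : Ω → α} {Y : Ω → β} {x : α} {y : β}
    (h : ∀ ω, X ω = x ↔ Y ω = y) : pr p X x = pr p Y y := by
  unfold pr
  refine Finset.sum_congr rfl fun ω _ => ?_
  by_cases hx : X ω = x
  · simp [hx, (h ω).mp hx]
  · rw [if_neg hx, if_neg fun hy => hx ((h ω).mpr hy)]

lemma pr_fst [Fintype β] (p : Ω → ℝ) (X : Ω → α) (Y : Ω → β) (x : α) :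
    pr p X x = ∑ y, pr p (fun ω => (X ω, Y ω)) (x, y) := by
  unfold pr
  rw [Finset.sum_comm]
  refine Finset.sum_congr rfl fun ω _ => ?_
  by_cases hx : X ω = x <;> simp [hx, Prod.mk.injEq]

lemma pr_snd [Fintype α] [Fintype β] (p : Ω → ℝ) (X : Ω → α) (Y : Ω → β) (y : β) :
    pr p Y y = ∑ x, pr p (fun ω => (X ω, Y ω)) (x, y) := by
  unfold pr
  rw [Finset.sum_comm]
  refine Finset.sum_congr rfl fun ω _ => ?_
  by_cases hy : Y ω = y <;> simp [hy, Prod.mk.injEq]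

lemma sum_pr [Fintype α] (p : Ω → ℝ) (X : Ω → α) : ∑ x, pr p X x = ∑ ω, p ω := by
  unfold pr
  rw [Finset.sum_comm]
  exact Finset.sum_congr rfl fun ω _ => by simp

lemma pr_condp (p : Ω → ℝ) (W : Ω → γ) (w : γ) (Y : Ω → α) (y : α) :
    pr (condp p W w) Y y = pr p (fun ω => (Y ω, W ω)) (y, w) / pr p W w := by
  unfold pr condp
  rw [Finset.sum_div]
  refine Finset.sum_congr rfl fun ω _ => ?_
  by_cases hy : Y ω = y <;> by_cases hw : W ω = w <;> simp [hy, hw, Prod.mk.injEq, pr]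

lemma condp_nonneg (p : Ω → ℝ) (hp : ∀ ω, 0 ≤ p ω) (W : Ω → γ) (w : γ) (ω : Ω) :
    0 ≤ condp p W w ω := by
  unfold condp
  split
  · exact div_nonneg (hp ω) (pr_nonneg p hp W w)
  · exact le_rfl

lemma sum_condp (p : Ω → ℝ) (W : Ω → γ) (w : γ) (hw : pr p W w ≠ 0) :
    ∑ ω, condp p W w ω = 1 := by
  have : ∑ ω, condp p W w ω = pr p W w / pr p W w := by
    unfold condp pr
    rw [Finset.sum_div]
    exact Finset.sum_congr rfl fun ω _ => by by_cases h : W ω = w <;> simp [h]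
  rw [this, div_self hw]

lemma mi_eq_sum [Fintype α] [Fintype β] (q : Ω → ℝ) (X : Ω → α) (Y : Ω → β) :
    mi q X Y = ∑ x, ∑ y, pr q (fun ω => (X ω, Y ω)) (x, y) *
      (Real.log (pr q (fun ω => (X ω, Y ω)) (x, y))
        - Real.log (pr q X x) - Real.log (pr q Y y)) := by
  have e1 : ∑ x, ∑ y, pr q (fun ω => (X ω, Y ω)) (x, y) * Real.log (pr q X x)
      = ∑ x, pr q X x * Real.log (pr q X x) :=
    Finset.sum_congr rfl fun x _ => by rw [← Finset.sum_mul, ← pr_fst q X Y x]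
  have e2 : ∑ x, ∑ y, pr q (fun ω => (X ω, Y ω)) (x, y) * Real.log (pr q Y y)
      = ∑ y, pr q Y y * Real.log (pr q Y y) := by
    rw [Finset.sum_comm]
    exact Finset.sum_congr rfl fun y _ => by rw [← Finset.sum_mul, ← pr_snd q X Y y]
  simp only [mul_sub, Finset.sum_sub_distrib]
  rw [e1, e2]
  unfold mi ent
  rw [Fintype.sum_prod_type]
  ring

lemma gibbs {S : Type*} [Fintype S] {f g : S → ℝ} (hf : ∀ s, 0 ≤ f s) (hg : ∀ s, 0 ≤ g s)
    (hsum : ∑ s, g s ≤ ∑ s, f s) (hsupp : ∀ s, g s = 0 → f s = 0) :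
    0 ≤ ∑ s, f s * Real.log (f s / g s) := by
  have key : ∀ s, f s - g s ≤ f s * Real.log (f s / g s) := by
    intro s
    rcases eq_or_lt_of_le (hf s) with h0 | h0
    · rw [← h0]
      simp [hg s]
    · have hg0 : 0 < g s := (hg s).lt_of_ne fun e => by
        have := hsupp s e.symm
        exact absurd this h0.ne'
      have hlog := Real.log_le_sub_one_of_pos (div_pos hg0 h0)
      have h1 : f s * Real.log (g s / f s) ≤ f s * (g s / f s - 1) :=
        mul_le_mul_of_nonneg_left hlog h0.le
      have h2 : f s * (g s / f s - 1) = g s - f s := by field_simp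
      have h3 : Real.log (f s / g s) = - Real.log (g s / f s) := by
        rw [← Real.log_inv, inv_div]
      rw [h3]
      nlinarith
  calc (0:ℝ) ≤ ∑ s, (f s - g s) := by rw [Finset.sum_sub_distrib]; linarith
    _ ≤ _ := Finset.sum_le_sum fun s _ => key s

lemma gibbs_eq {S : Type*} [Fintype S] {f g : S → ℝ} (hf : ∀ s, 0 ≤ f s) (hg : ∀ s, 0 ≤ g s)
    (hsum : ∑ s, g s ≤ ∑ s, f s) (hsupp : ∀ s, g s = 0 → f s = 0)
    (hzero : ∑ s, f s * Real.log (f s / g s) ≤ 0) : ∀ s, f s = g s := by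
  have key : ∀ s, f s - g s ≤ f s * Real.log (f s / g s) := by
    intro s
    rcases eq_or_lt_of_le (hf s) with h0 | h0
    · rw [← h0]
      simp [hg s]
    · have hg0 : 0 < g s := (hg s).lt_of_ne fun e => by
        have := hsupp s e.symm
        exact absurd this h0.ne'
      have hlog := Real.log_le_sub_one_of_pos (div_pos hg0 h0)
      have h1 : f s * Real.log (g s / f s) ≤ f s * (g s / f s - 1) :=
        mul_le_mul_of_nonneg_left hlog h0.le
      have h2 : f s * (g s / f s - 1) = g s - f s := by field_simp
      have h3 : Real.log (f s / g s) = - Real.log (g s / f s) := by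
        rw [← Real.log_inv, inv_div]
      rw [h3]
      nlinarith
  have hT : ∀ s ∈ (univ : Finset S), (0:ℝ) ≤ f s * Real.log (f s / g s) - (f s - g s) :=
    fun s _ => by linarith [key s]
  have hTsum : ∑ s, (f s * Real.log (f s / g s) - (f s - g s)) = 0 := by
    have h1 : ∑ s, (f s * Real.log (f s / g s) - (f s - g s))
        = ∑ s, f s * Real.log (f s / g s) - (∑ s, f s - ∑ s, g s) := by
      rw [Finset.sum_sub_distrib, Finset.sum_sub_distrib]
    have h2 : (0:ℝ) ≤ ∑ s, (f s * Real.log (f s / g s) - (f s - g s)) :=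
      Finset.sum_nonneg hT
    have h3 : ∑ s, (f s * Real.log (f s / g s) - (f s - g s)) ≤ 0 := by
      rw [h1]; linarith
    linarith
  have hTzero := (Finset.sum_eq_zero_iff_of_nonneg hT).mp hTsum
  intro s
  have hs := hTzero s (Finset.mem_univ s)
  rcases eq_or_lt_of_le (hf s) with h0 | h0
  · rw [← h0] at hs ⊢
    simp at hs
    linarith
  · have hg0 : 0 < g s := (hg s).lt_of_ne fun e => by
      have := hsupp s e.symm
      exact absurd this h0.ne'
    by_contra hne
    have hratio : g s / f s ≠ 1 := by
      intro h1
      exact hne (by field_simp at h1; linarith)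
    have hlt := Real.log_lt_sub_one_of_pos (div_pos hg0 h0) hratio
    have h1 : f s * Real.log (g s / f s) < f s * (g s / f s - 1) :=
      (mul_lt_mul_iff_right₀ h0).mpr hlt
    have h2 : f s * (g s / f s - 1) = g s - f s := by field_simp
    have h3 : Real.log (f s / g s) = - Real.log (g s / f s) := by
      rw [← Real.log_inv, inv_div]
    rw [h3] at hs
    nlinarith

lemma mi_eq_kl [Fintype α] [Fintype β] (q : Ω → ℝ) (hq : ∀ ω, 0 ≤ q ω) (X : Ω → α) (Y : Ω → β) :
    mi q X Y = ∑ s : α × β, pr q (fun ω => (X ω, Y ω)) s *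
      Real.log (pr q (fun ω => (X ω, Y ω)) s / (pr q X s.1 * pr q Y s.2)) := by
  rw [mi_eq_sum, Fintype.sum_prod_type]
  refine Finset.sum_congr rfl fun x _ => Finset.sum_congr rfl fun y _ => ?_
  dsimp only
  rcases eq_or_lt_of_le (pr_nonneg q hq (fun ω => (X ω, Y ω)) (x, y)) with h0 | h0
  · rw [← h0]; ring
  · have hax : 0 < pr q X x :=
      lt_of_lt_of_le h0 (pr_mono q hq fun ω hh => (Prod.ext_iff.mp hh).1)
    have hby : 0 < pr q Y y :=
      lt_of_lt_of_le h0 (pr_mono q hq fun ω hh => (Prod.ext_iff.mp hh).2)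
    rw [Real.log_div h0.ne' (by positivity), Real.log_mul hax.ne' hby.ne']
    ring

lemma mi_nonneg [Fintype α] [Fintype β] (q : Ω → ℝ) (hq : ∀ ω, 0 ≤ q ω)
    (hq1 : ∑ ω, q ω = 1) (X : Ω → α) (Y : Ω → β) : 0 ≤ mi q X Y := by
  rw [mi_eq_kl q hq]
  refine gibbs (fun s => pr_nonneg q hq _ s)
    (fun s => mul_nonneg (pr_nonneg q hq X s.1) (pr_nonneg q hq Y s.2)) ?_ ?_
  · have h1 : ∑ s : α × β, pr q X s.1 * pr q Y s.2 = (∑ x, pr q X x) * (∑ y, pr q Y y) := by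
      rw [Fintype.sum_prod_type, Finset.sum_mul_sum]
    have h2 : ∑ s : α × β, pr q (fun ω => (X ω, Y ω)) s = 1 := by
      rw [sum_pr, hq1]
    rw [h1, h2, sum_pr, sum_pr, hq1, mul_one]
  · intro s hs
    rcases mul_eq_zero.mp hs with h | h
    · refine le_antisymm ?_ (pr_nonneg q hq _ s)
      rw [← h]
      exact pr_mono q hq fun ω hh => (Prod.ext_iff.mp hh).1
    · refine le_antisymm ?_ (pr_nonneg q hq _ s)
      rw [← h]
      exact pr_mono q hq fun ω hh => (Prod.ext_iff.mp hh).2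

lemma ci_of_cmi_zero {Ω 𝒳 𝒳' 𝒵 : Type*} [Fintype Ω] [Fintype 𝒳] [Fintype 𝒳'] [Fintype 𝒵]
    (p : Ω → ℝ) (hp : ∀ ω, 0 ≤ p ω)
    (X : Ω → 𝒳) (X' : Ω → 𝒳') (Z : Ω → 𝒵)
    (h : cmi p X' Z X = 0) (x : 𝒳) (z : 𝒵) (x' : 𝒳') :
    pr p (fun ω => ((X ω, Z ω), X' ω)) ((x, z), x') * pr p X x
      = pr p (fun ω => (X ω, X' ω)) (x, x') * pr p (fun ω => (Z ω, X ω)) (z, x) := by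
  rcases eq_or_lt_of_le (pr_nonneg p hp X x) with hx0 | hx0
  · have h1 : pr p (fun ω => ((X ω, Z ω), X' ω)) ((x,z),x') = 0 :=
      le_antisymm (hx0 ▸ pr_mono p hp fun ω hh => (Prod.ext_iff.mp (Prod.ext_iff.mp hh).1).1)
        (pr_nonneg p hp _ _)
    have h2 : pr p (fun ω => (Z ω, X ω)) (z, x) = 0 :=
      le_antisymm (hx0 ▸ pr_mono p hp fun ω hh => (Prod.ext_iff.mp hh).2) (pr_nonneg p hp _ _)
    rw [h1, h2]
    ring
  · have hqnn : ∀ ω, 0 ≤ condp p X x ω := condp_nonneg p hp X x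
    have hq1 : ∑ ω, condp p X x ω = 1 := sum_condp p X x hx0.ne'
    have hterm : ∀ x₀ ∈ (univ : Finset 𝒳), 0 ≤ pr p X x₀ * mi (condp p X x₀) X' Z := by
      intro x₀ _
      rcases eq_or_lt_of_le (pr_nonneg p hp X x₀) with h0 | h0
      · rw [← h0, zero_mul]
      · exact mul_nonneg h0.le
          (mi_nonneg _ (condp_nonneg p hp X x₀) (sum_condp p X x₀ h0.ne') X' Z)
    have hmi0 : pr p X x * mi (condp p X x) X' Z = 0 :=
      (Finset.sum_eq_zero_iff_of_nonneg hterm).mp h x (mem_univ x)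
    have hmi : mi (condp p X x) X' Z = 0 := by
      rcases mul_eq_zero.mp hmi0 with h' | h'
      · exact absurd h' hx0.ne'
      · exact h'
    have hkl : ∑ s : 𝒳' × 𝒵, pr (condp p X x) (fun ω => (X' ω, Z ω)) s *
        Real.log (pr (condp p X x) (fun ω => (X' ω, Z ω)) s /
          (pr (condp p X x) X' s.1 * pr (condp p X x) Z s.2)) ≤ 0 := by
      rw [← mi_eq_kl (condp p X x) hqnn X' Z, hmi]
    have hgs : ∑ s : 𝒳' × 𝒵, pr (condp p X x) X' s.1 * pr (condp p X x) Z s.2 = 1 := by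
      rw [Fintype.sum_prod_type]
      simp only [← Finset.sum_mul_sum]
      rw [sum_pr, sum_pr, hq1, mul_one]
    have hfs : ∑ s : 𝒳' × 𝒵, pr (condp p X x) (fun ω => (X' ω, Z ω)) s = 1 := by
      rw [sum_pr, hq1]
    have hfg := gibbs_eq (f := fun s : 𝒳' × 𝒵 => pr (condp p X x) (fun ω => (X' ω, Z ω)) s)
      (g := fun s => pr (condp p X x) X' s.1 * pr (condp p X x) Z s.2)
      (fun s => pr_nonneg _ hqnn _ s)
      (fun s => mul_nonneg (pr_nonneg _ hqnn X' s.1) (pr_nonneg _ hqnn Z s.2))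
      (by rw [hgs, hfs])
      (fun s hs => by
        rcases mul_eq_zero.mp hs with h' | h'
        · exact le_antisymm (h' ▸ pr_mono _ hqnn fun ω hh => (Prod.ext_iff.mp hh).1)
            (pr_nonneg _ hqnn _ s)
        · exact le_antisymm (h' ▸ pr_mono _ hqnn fun ω hh => (Prod.ext_iff.mp hh).2)
            (pr_nonneg _ hqnn _ s))
      hkl (x', z)
    dsimp only at hfg
    rw [pr_condp, pr_condp, pr_condp] at hfg
    have e1 : pr p (fun ω => ((X ω, Z ω), X' ω)) ((x, z), x')
        = pr p (fun ω => ((X' ω, Z ω), X ω)) ((x', z), x) := by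
      refine pr_congr p fun ω => ?_
      constructor <;> (intro hh; simp only [Prod.ext_iff] at hh ⊢; tauto)
    have e2 : pr p (fun ω => (X ω, X' ω)) (x, x')
        = pr p (fun ω => (X' ω, X ω)) (x', x) := by
      refine pr_congr p fun ω => ?_
      constructor <;> (intro hh; simp only [Prod.ext_iff] at hh ⊢; tauto)
    rw [e1, e2]
    have hxne : pr p X x ≠ 0 := hx0.ne'
    field_simp at hfg
    exact mul_right_cancel₀ hxne (by linear_combination (pr p X x) * hfg)

lemma cmi_eq_sum3 {Ω 𝒳 𝒳' 𝒵 : Type*} [Fintype Ω] [Fintype 𝒳] [Fintype 𝒳'] [Fintype 𝒵]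
    (p : Ω → ℝ) (hp : ∀ ω, 0 ≤ p ω) (X : Ω → 𝒳) (Z : Ω → 𝒵) (X' : Ω → 𝒳') :
    cmi p X Z X' = ∑ x', ∑ x, ∑ z,
      pr p (fun ω => ((X ω, Z ω), X' ω)) ((x, z), x') *
        (Real.log (pr p (fun ω => ((X ω, Z ω), X' ω)) ((x, z), x'))
          + Real.log (pr p X' x')
          - Real.log (pr p (fun ω => (X ω, X' ω)) (x, x'))
          - Real.log (pr p (fun ω => (Z ω, X' ω)) (z, x'))) := by
  unfold cmi
  refine Finset.sum_congr rfl fun x' _ => ?_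
  rcases eq_or_lt_of_le (pr_nonneg p hp X' x') with h0 | h0
  · rw [← h0, zero_mul]
    symm
    refine Finset.sum_eq_zero fun x _ => Finset.sum_eq_zero fun z _ => ?_
    have hc : pr p (fun ω => ((X ω, Z ω), X' ω)) ((x, z), x') = 0 :=
      le_antisymm (h0 ▸ pr_mono p hp fun ω hh => (Prod.ext_iff.mp hh).2) (pr_nonneg p hp _ _)
    rw [hc, zero_mul]
  · rw [mi_eq_sum, Finset.mul_sum]
    refine Finset.sum_congr rfl fun x _ => ?_
    rw [Finset.mul_sum]
    refine Finset.sum_congr rfl fun z _ => ?_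
    rw [pr_condp, pr_condp, pr_condp]
    rcases eq_or_lt_of_le
        (pr_nonneg p hp (fun ω => ((X ω, Z ω), X' ω)) ((x, z), x')) with hJ | hJ
    · rw [← hJ]
      simp only [zero_div, zero_mul, mul_zero]
    · have ha : 0 < pr p (fun ω => (X ω, X' ω)) (x, x') :=
        lt_of_lt_of_le hJ (pr_mono p hp fun ω hh => by
          simp only [Prod.ext_iff] at hh ⊢; tauto)
      have hb : 0 < pr p (fun ω => (Z ω, X' ω)) (z, x') :=
        lt_of_lt_of_le hJ (pr_mono p hp fun ω hh => by
          simp only [Prod.ext_iff] at hh ⊢; tauto)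
      have hcne : pr p X' x' ≠ 0 := h0.ne'
      rw [Real.log_div hJ.ne' hcne, Real.log_div ha.ne' hcne, Real.log_div hb.ne' hcne]
      have hcJ : pr p X' x' *
          (pr p (fun ω => ((X ω, Z ω), X' ω)) ((x, z), x') / pr p X' x')
          = pr p (fun ω => ((X ω, Z ω), X' ω)) ((x, z), x') := by
        field_simp
      rw [← mul_assoc, hcJ]
      ring

lemma A_eq {Ω 𝒳 𝒳' 𝒵 : Type*} [Fintype Ω] [Fintype 𝒳] [Fintype 𝒳'] [Fintype 𝒵]
    (p : Ω → ℝ) (hp : ∀ ω, 0 ≤ p ω) (X : Ω → 𝒳) (X' : Ω → 𝒳') (Z : Ω → 𝒵)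
    (hCI : ∀ x z x', pr p (fun ω => ((X ω, Z ω), X' ω)) ((x, z), x') * pr p X x
      = pr p (fun ω => (X ω, X' ω)) (x, x') * pr p (fun ω => (Z ω, X ω)) (z, x))
    (r : 𝒳' → 𝒵 → ℝ)
    (hrsupp : ∀ x', 0 < pr p X' x' → ∀ z,
      0 < pr p (fun ω => (Z ω, X' ω)) (z, x') → 0 < r x' z) :
    (∑ xx' : 𝒳 × 𝒳', pr p (fun ω => (X ω, X' ω)) xx' *
        klDivF (fun z => pr p (fun ω => (Z ω, X ω)) (z, xx'.1) / pr p X xx'.1) (r xx'.2))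
    = ∑ x, ∑ x', ∑ z,
      pr p (fun ω => ((X ω, Z ω), X' ω)) ((x, z), x') *
        (Real.log (pr p (fun ω => ((X ω, Z ω), X' ω)) ((x, z), x'))
          - Real.log (pr p (fun ω => (X ω, X' ω)) (x, x'))
          - Real.log (r x' z)) := by
  rw [Fintype.sum_prod_type]
  refine Finset.sum_congr rfl fun x _ => Finset.sum_congr rfl fun x' _ => ?_
  unfold klDivF
  rw [Finset.mul_sum]
  refine Finset.sum_congr rfl fun z _ => ?_
  dsimp only
  have hco : pr p (fun ω => (X ω, X' ω)) (x, x') *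
      (pr p (fun ω => (Z ω, X ω)) (z, x) / pr p X x)
      = pr p (fun ω => ((X ω, Z ω), X' ω)) ((x, z), x') := by
    rcases eq_or_lt_of_le (pr_nonneg p hp X x) with h0 | h0
    · have hzx : pr p (fun ω => (Z ω, X ω)) (z, x) = 0 :=
        le_antisymm (h0 ▸ pr_mono p hp fun ω hh => (Prod.ext_iff.mp hh).2) (pr_nonneg p hp _ _)
      have hJ : pr p (fun ω => ((X ω, Z ω), X' ω)) ((x, z), x') = 0 :=
        le_antisymm (h0 ▸ pr_mono p hp fun ω hh =>
          (Prod.ext_iff.mp (Prod.ext_iff.mp hh).1).1) (pr_nonneg p hp _ _)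
      rw [hzx, hJ, zero_div, mul_zero]
    · rw [← mul_div_assoc, div_eq_iff h0.ne']
      linarith [hCI x z x']
  rw [← mul_assoc, hco]
  rcases eq_or_lt_of_le
      (pr_nonneg p hp (fun ω => ((X ω, Z ω), X' ω)) ((x, z), x')) with hJ | hJ
  · rw [← hJ, zero_mul, zero_mul]
  · have hpx : 0 < pr p X x :=
      lt_of_lt_of_le hJ (pr_mono p hp fun ω hh =>
        (Prod.ext_iff.mp (Prod.ext_iff.mp hh).1).1)
    have hpzx : 0 < pr p (fun ω => (Z ω, X ω)) (z, x) :=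
      lt_of_lt_of_le hJ (pr_mono p hp fun ω hh => by
        simp only [Prod.ext_iff] at hh ⊢; tauto)
    have hpxx' : 0 < pr p (fun ω => (X ω, X' ω)) (x, x') :=
      lt_of_lt_of_le hJ (pr_mono p hp fun ω hh => by
        simp only [Prod.ext_iff] at hh ⊢; tauto)
    have hpx' : 0 < pr p X' x' :=
      lt_of_lt_of_le hJ (pr_mono p hp fun ω hh => (Prod.ext_iff.mp hh).2)
    have hpzx' : 0 < pr p (fun ω => (Z ω, X' ω)) (z, x') :=
      lt_of_lt_of_le hJ (pr_mono p hp fun ω hh => by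
        simp only [Prod.ext_iff] at hh ⊢; tauto)
    have hr : 0 < r x' z := hrsupp x' hpx' z hpzx'
    rw [Real.log_div (div_pos hpzx hpx).ne' hr.ne', Real.log_div hpzx.ne' hpx.ne']
    have hlog := congrArg Real.log (hCI x z x')
    rw [Real.log_mul hJ.ne' hpx.ne', Real.log_mul hpxx'.ne' hpzx.ne'] at hlog
    linear_combination (-(pr p (fun ω => ((X ω, Z ω), X' ω)) ((x, z), x'))) * hlog

lemma B_eq {Ω 𝒳' 𝒵 : Type*} [Fintype Ω] [Fintype 𝒳'] [Fintype 𝒵]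
    (p : Ω → ℝ) (hp : ∀ ω, 0 ≤ p ω) (X' : Ω → 𝒳') (Z : Ω → 𝒵)
    (r : 𝒳' → 𝒵 → ℝ)
    (hrsupp : ∀ x', 0 < pr p X' x' → ∀ z,
      0 < pr p (fun ω => (Z ω, X' ω)) (z, x') → 0 < r x' z) :
    (∑ x', pr p X' x' *
        klDivF (fun z => pr p (fun ω => (Z ω, X' ω)) (z, x') / pr p X' x') (r x'))
    = ∑ x', ∑ z, pr p (fun ω => (Z ω, X' ω)) (z, x') *
        (Real.log (pr p (fun ω => (Z ω, X' ω)) (z, x'))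
          - Real.log (pr p X' x') - Real.log (r x' z)) := by
  refine Finset.sum_congr rfl fun x' _ => ?_
  unfold klDivF
  rw [Finset.mul_sum]
  refine Finset.sum_congr rfl fun z _ => ?_
  dsimp only
  rcases eq_or_lt_of_le (pr_nonneg p hp X' x') with h0 | h0
  · have hzx : pr p (fun ω => (Z ω, X' ω)) (z, x') = 0 :=
      le_antisymm (h0 ▸ pr_mono p hp fun ω hh => (Prod.ext_iff.mp hh).2) (pr_nonneg p hp _ _)
    rw [← h0, hzx]
    simp only [zero_mul, mul_zero, zero_div]
  · rcases eq_or_lt_of_le (pr_nonneg p hp (fun ω => (Z ω, X' ω)) (z, x')) with hb | hb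
    · rw [← hb]
      simp only [zero_div, zero_mul, mul_zero]
    · have hr : 0 < r x' z := hrsupp x' h0 z hb
      rw [Real.log_div (div_pos hb h0).ne' hr.ne', Real.log_div hb.ne' h0.ne']
      have hcJ : pr p X' x' *
          (pr p (fun ω => (Z ω, X' ω)) (z, x') / pr p X' x')
          = pr p (fun ω => (Z ω, X' ω)) (z, x') := by
        field_simp
      rw [← mul_assoc, hcJ]

lemma marg_zx' {Ω 𝒳 𝒳' 𝒵 : Type*} [Fintype Ω] [Fintype 𝒳] [Fintype 𝒳'] [Fintype 𝒵]
    (p : Ω → ℝ) (X : Ω → 𝒳) (X' : Ω → 𝒳') (Z : Ω → 𝒵) (z : 𝒵) (x' : 𝒳') :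
    pr p (fun ω => (Z ω, X' ω)) (z, x')
      = ∑ x, pr p (fun ω => ((X ω, Z ω), X' ω)) ((x, z), x') := by
  rw [pr_fst p (fun ω => (Z ω, X' ω)) X (z, x')]
  refine Finset.sum_congr rfl fun x _ => ?_
  refine pr_congr p fun ω => ?_
  constructor <;> (intro hh; simp only [Prod.ext_iff] at hh ⊢; tauto)

lemma marg_z {Ω 𝒳' 𝒵 : Type*} [Fintype Ω] [Fintype 𝒳'] [Fintype 𝒵]
    (p : Ω → ℝ) (X' : Ω → 𝒳') (Z : Ω → 𝒵) (x' : 𝒳') :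
    ∑ z, pr p (fun ω => (Z ω, X' ω)) (z, x') = pr p X' x' := by
  rw [pr_fst p X' Z x']
  refine Finset.sum_congr rfl fun z _ => ?_
  refine pr_congr p fun ω => ?_
  constructor <;> (intro hh; simp only [Prod.ext_iff] at hh ⊢; tauto)

end VarBoundAux

/-- variational upper bound on conditional mutual information.
Assume `I(X'; Z | X) = 0` and for each `x'` in the support of `X'` let
`r(·|x')` be a pmf on the range of `Z` with `r(z|x') > 0` whenever
`P(Z=z, X'=x') > 0`.  Then
`I(X; Z | X') = E_{(x,x')}[D_KL(P(Z|X=x) ‖ r(·|x'))] - E_{x'}[D_KL(P(Z|X'=x') ‖ r(·|x'))]`,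
and in particular `I(X; Z | X') ≤ E_{(x,x')}[D_KL(P(Z|X=x) ‖ r(·|x'))]`. -/
theorem variational_bound_cmi
    {Ω 𝒳 𝒳' 𝒵 : Type*} [Fintype Ω] [Fintype 𝒳] [Fintype 𝒳'] [Fintype 𝒵]
    [Nonempty 𝒳] [Nonempty 𝒳'] [Nonempty 𝒵]
    (p : Ω → ℝ) (hp : ∀ ω, 0 ≤ p ω) (hsum : ∑ ω, p ω = 1)
    (X : Ω → 𝒳) (X' : Ω → 𝒳') (Z : Ω → 𝒵)
    (h : cmi p X' Z X = 0)
    (r : 𝒳' → 𝒵 → ℝ)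
    (hr0 : ∀ x', 0 < pr p X' x' → ∀ z, 0 ≤ r x' z)
    (hr1 : ∀ x', 0 < pr p X' x' → ∑ z, r x' z = 1)
    (hrsupp : ∀ x', 0 < pr p X' x' → ∀ z,
      0 < pr p (fun ω => (Z ω, X' ω)) (z, x') → 0 < r x' z) :
    cmi p X Z X' =
      (∑ xx' : 𝒳 × 𝒳', pr p (fun ω => (X ω, X' ω)) xx' *
        klDivF (fun z => pr p (fun ω => (Z ω, X ω)) (z, xx'.1) / pr p X xx'.1)
          (r xx'.2)) -
      (∑ x', pr p X' x' *
        klDivF (fun z => pr p (fun ω => (Z ω, X' ω)) (z, x') / pr p X' x')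
          (r x')) ∧
    cmi p X Z X' ≤
      ∑ xx' : 𝒳 × 𝒳', pr p (fun ω => (X ω, X' ω)) xx' *
        klDivF (fun z => pr p (fun ω => (Z ω, X ω)) (z, xx'.1) / pr p X xx'.1)
          (r xx'.2) := by
  open VarBoundAux in
  have hCI : ∀ x z x', pr p (fun ω => ((X ω, Z ω), X' ω)) ((x, z), x') * pr p X x
      = pr p (fun ω => (X ω, X' ω)) (x, x') * pr p (fun ω => (Z ω, X ω)) (z, x) :=
    fun x z x' => VarBoundAux.ci_of_cmi_zero p hp X X' Z h x z x'
  have hB0 : 0 ≤ ∑ x', pr p X' x' *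
      klDivF (fun z => pr p (fun ω => (Z ω, X' ω)) (z, x') / pr p X' x') (r x') := by
    refine Finset.sum_nonneg fun x' _ => ?_
    rcases eq_or_lt_of_le (VarBoundAux.pr_nonneg p hp X' x') with h0 | h0
    · rw [← h0, zero_mul]
    · refine mul_nonneg h0.le ?_
      unfold klDivF
      refine VarBoundAux.gibbs
        (f := fun z => pr p (fun ω => (Z ω, X' ω)) (z, x') / pr p X' x')
        (g := fun z => r x' z)
        (fun z => div_nonneg (VarBoundAux.pr_nonneg p hp _ _) h0.le)
        (hr0 x' h0) ?_ ?_
      · rw [hr1 x' h0, ← Finset.sum_div, VarBoundAux.marg_z p X' Z x', div_self h0.ne']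
      · intro z hz
        have hbz : pr p (fun ω => (Z ω, X' ω)) (z, x') = 0 := by
          by_contra hne
          have hpos : 0 < pr p (fun ω => (Z ω, X' ω)) (z, x') :=
            lt_of_le_of_ne (VarBoundAux.pr_nonneg p hp _ _) (Ne.symm hne)
          have := hrsupp x' h0 z hpos
          rw [hz] at this
          exact lt_irrefl 0 this
        rw [hbz, zero_div]
  have heq : cmi p X Z X' =
      (∑ xx' : 𝒳 × 𝒳', pr p (fun ω => (X ω, X' ω)) xx' *
        klDivF (fun z => pr p (fun ω => (Z ω, X ω)) (z, xx'.1) / pr p X xx'.1)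
          (r xx'.2)) -
      (∑ x', pr p X' x' *
        klDivF (fun z => pr p (fun ω => (Z ω, X' ω)) (z, x') / pr p X' x')
          (r x')) := by
    rw [VarBoundAux.cmi_eq_sum3 p hp X Z X', VarBoundAux.A_eq p hp X X' Z hCI r hrsupp,
        VarBoundAux.B_eq p hp X' Z r hrsupp]
    have hA2 : (∑ x, ∑ x', ∑ z,
        pr p (fun ω => ((X ω, Z ω), X' ω)) ((x, z), x') *
          (Real.log (pr p (fun ω => ((X ω, Z ω), X' ω)) ((x, z), x'))
            - Real.log (pr p (fun ω => (X ω, X' ω)) (x, x'))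
            - Real.log (r x' z)))
        = ∑ x', ∑ x, ∑ z,
        pr p (fun ω => ((X ω, Z ω), X' ω)) ((x, z), x') *
          (Real.log (pr p (fun ω => ((X ω, Z ω), X' ω)) ((x, z), x'))
            - Real.log (pr p (fun ω => (X ω, X' ω)) (x, x'))
            - Real.log (r x' z)) := Finset.sum_comm
    have hB2 : (∑ x', ∑ z, pr p (fun ω => (Z ω, X' ω)) (z, x') *
          (Real.log (pr p (fun ω => (Z ω, X' ω)) (z, x'))
            - Real.log (pr p X' x') - Real.log (r x' z)))
        = ∑ x', ∑ x, ∑ z,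
          pr p (fun ω => ((X ω, Z ω), X' ω)) ((x, z), x') *
            (Real.log (pr p (fun ω => (Z ω, X' ω)) (z, x'))
              - Real.log (pr p X' x') - Real.log (r x' z)) := by
      refine Finset.sum_congr rfl fun x' _ => ?_
      rw [Finset.sum_comm]
      refine Finset.sum_congr rfl fun z _ => ?_
      rw [← Finset.sum_mul, ← VarBoundAux.marg_zx' p X X' Z z x']
    rw [hA2, hB2, ← Finset.sum_sub_distrib]
    refine Finset.sum_congr rfl fun x' _ => ?_
    rw [← Finset.sum_sub_distrib]
    refine Finset.sum_congr rfl fun x _ => ?_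
    rw [← Finset.sum_sub_distrib]
    refine Finset.sum_congr rfl fun z _ => ?_
    ring
  exact ⟨heq, by rw [heq]; linarith⟩
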